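/- Let d ≥ 1, α ∈ (0, β), β ∈ (0, d+2]. There exists a constant N = N(d, α, β) such that for every measurable g ≥ 0 on ℝ^{d+1}, every ρ ∈ (0, ∞), and every (t,x) ∈ C_ρ, one has P_α(1_{C_{2ρ}^c} g)(t,x) ≤ N ρ^{α-β} M_β g(t,x). -/

import Mathlib

open MeasureTheory Set ENNReal Filter

noncomputable section

/-- Euclidean space `ℝ^d`. -/
abbrev Ed (d : ℕ) := EuclideanSpace ℝ (Fin d)

/-- Points of `ℝ^{d+1}`: `z = (t, x)`. -/
abbrev Pt (d : ℕ) := ℝ × Ed d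

/-- The parabolic cylinder `C_ρ(t,x)`. -/
def pCyl (d : ℕ) (ρ : ℝ) (z : Pt d) : Set (Pt d) :=
  {w | dist z.2 w.2 < ρ ∧ z.1 ≤ w.1 ∧ w.1 < z.1 + ρ ^ 2}

/-- The average `⨍_{C_ρ(z)} f`. -/
def pAvg (d : ℕ) (ρ : ℝ) (z : Pt d) (f : Pt d → ℝ≥0∞) : ℝ≥0∞ :=
  (volume (pCyl d ρ z))⁻¹ * ∫⁻ w in pCyl d ρ z, f w

/-- The fractional maximal function `M_β f`. -/
def Mbeta (d : ℕ) (β : ℝ) (f : Pt d → ℝ≥0∞) (z : Pt d) : ℝ≥0∞ :=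
  ⨆ (ρ : ℝ) (_ : 0 < ρ), ENNReal.ofReal (ρ ^ β) * pAvg d ρ z f

/-- The kernel `p_α(s, r)`. -/
def pKer (d : ℕ) (α : ℝ) (s r : ℝ) : ℝ≥0∞ :=
  if 0 < s then ENNReal.ofReal (s ^ (-(((d : ℝ) + 2 - α) / 2)) * Real.exp (-(r ^ 2) / s)) else 0

/-- The parabolic potential `P_α f`. -/
def Palpha (d : ℕ) (α : ℝ) (f : Pt d → ℝ≥0∞) (z : Pt d) : ℝ≥0∞ :=
  ∫⁻ w : Pt d, pKer d α w.1 ‖w.2‖ * f (z.1 + w.1, z.2 + w.2)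

/-- The parabolic Morrey norm `‖f‖_{E_{p,β}(Q)}`. -/
def MorreyNorm (d : ℕ) (p β : ℝ) (Q : Set (Pt d)) (f : Pt d → ℝ≥0∞) : ℝ≥0∞ :=
  ⨆ (ρ : ℝ) (_ : 0 < ρ) (z : Pt d) (_ : z ∈ Q),
    ENNReal.ofReal (ρ ^ β) * (pAvg d ρ z fun w => Q.indicator f w ^ p) ^ (1 / p)

/-- The `L_p`-norm on `ℝ^{d+1}`. -/
def LpNormE (d : ℕ) (p : ℝ) (f : Pt d → ℝ≥0∞) : ℝ≥0∞ :=
  (∫⁻ z : Pt d, f z ^ p) ^ (1 / p)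

/-- The mixed norm `‖f‖_{L_{q₁,q₂}}`. -/
def MixedNorm (d : ℕ) (q₁ q₂ : ℝ) (f : Pt d → ℝ≥0∞) : ℝ≥0∞ :=
  (∫⁻ t : ℝ, (∫⁻ x : Ed d, f (t, x) ^ q₁) ^ (q₂ / q₁)) ^ (1 / q₂)

/-- The normalized mixed norm `‖f‖_{L_{q₁,q₂}(Γ)}`. -/
def MixedNormOn (d : ℕ) (q₁ q₂ : ℝ) (Γ : Set (Pt d)) (f : Pt d → ℝ≥0∞) : ℝ≥0∞ :=
  (MixedNorm d q₁ q₂ (Γ.indicator 1))⁻¹ * MixedNorm d q₁ q₂ (Γ.indicator f)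

/-- The mixed-norm parabolic Morrey norm `‖f‖_{E_{q₁,q₂,β}(Q)}`. -/
def MixedMorrey (d : ℕ) (q₁ q₂ β : ℝ) (Q : Set (Pt d)) (f : Pt d → ℝ≥0∞) : ℝ≥0∞ :=
  ⨆ (ρ : ℝ) (_ : 0 < ρ) (z : Pt d) (_ : z ∈ Q),
    ENNReal.ofReal (ρ ^ β) * MixedNormOn d q₁ q₂ (pCyl d ρ z) (Q.indicator f)

/-- The symmetric parabolic maximal function `M̂ f`. -/
def pMax (d : ℕ) (f : Pt d → ℝ≥0∞) (z : Pt d) : ℝ≥0∞ :=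
  ⨆ (r : ℝ) (_ : 0 < r) (w : Pt d) (_ : z ∈ pCyl d r w), pAvg d r w f

/-- The time derivative `∂_t u`. -/
def timeDeriv (d : ℕ) (u : Pt d → ℝ) (z : Pt d) : ℝ :=
  fderiv ℝ u z ((1 : ℝ), (0 : Ed d))

/-- The spatial partial derivative `D_i u`. -/
def spDeriv (d : ℕ) (i : Fin d) (u : Pt d → ℝ) (z : Pt d) : ℝ :=
  fderiv ℝ u z ((0 : ℝ), EuclideanSpace.single i (1 : ℝ))

/-- The Euclidean norm of the spatial gradient `|Du|`. -/
def gradNorm (d : ℕ) (u : Pt d → ℝ) (z : Pt d) : ℝ :=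
  Real.sqrt (∑ i : Fin d, spDeriv d i u z ^ 2)

/-- The spatial Laplacian `Δu`. -/
def lap (d : ℕ) (u : Pt d → ℝ) (z : Pt d) : ℝ :=
  ∑ i : Fin d, spDeriv d i (spDeriv d i u) z

/-- The (Frobenius) norm of the spatial Hessian `|D²u|`. -/
def hessNorm (d : ℕ) (u : Pt d → ℝ) (z : Pt d) : ℝ :=
  Real.sqrt (∑ i : Fin d, ∑ j : Fin d, spDeriv d i (spDeriv d j u) z ^ 2)



/-! ### Auxiliary lemmas for Statement 5 -/

lemma pCyl_eq' (d : ℕ) (ρ : ℝ) (z : Pt d) :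
    pCyl d ρ z = Set.Ico z.1 (z.1 + ρ ^ 2) ×ˢ Metric.ball z.2 ρ := by
  ext w
  simp only [pCyl, Set.mem_setOf_eq, Set.mem_prod, Set.mem_Ico, Metric.mem_ball, dist_comm]
  tauto

lemma measurableSet_pCyl' (d : ℕ) (ρ : ℝ) (z : Pt d) : MeasurableSet (pCyl d ρ z) := by
  rw [pCyl_eq']
  exact (measurableSet_Ico).prod measurableSet_ball

lemma volume_pCyl' (d : ℕ) (hd : 1 ≤ d) (ρ : ℝ) (hρ : 0 ≤ ρ) (z : Pt d) :
    volume (pCyl d ρ z) =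
      ENNReal.ofReal (ρ ^ 2) * (ENNReal.ofReal (ρ ^ d) * volume (Metric.ball (0 : Ed d) 1)) := by
  haveI : Nonempty (Fin d) := Fin.pos_iff_nonempty.mp hd
  rw [pCyl_eq', Measure.volume_eq_prod, Measure.prod_prod, Real.volume_Ico,
    Measure.addHaar_ball _ _ hρ, finrank_euclideanSpace_fin]
  ring_nf

lemma mem_pCyl_add' (d : ℕ) (r : ℝ) (z w : Pt d) :
    z + w ∈ pCyl d r z ↔ w ∈ pCyl d r 0 := by
  simp only [pCyl, Set.mem_setOf_eq, Prod.fst_add, Prod.snd_add, dist_eq_norm,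
    Prod.fst_zero, Prod.snd_zero]
  constructor
  · rintro ⟨h1, h2, h3⟩
    exact ⟨by simpa using h1, by linarith, by simpa using h3⟩
  · rintro ⟨h1, h2, h3⟩
    refine ⟨by simpa using h1, by linarith, by simpa using h3⟩

lemma pCyl_sub' (d : ℕ) (ρ : ℝ) {z u : Pt d} (hz : z ∈ pCyl d ρ 0) (hu : u ∈ pCyl d ρ z) :
    u ∈ pCyl d (2 * ρ) 0 := by
  obtain ⟨hz1, hz2, hz3⟩ := hz
  obtain ⟨hu1, hu2, hu3⟩ := hu
  have hρ : 0 ≤ ρ := le_of_lt (lt_of_le_of_lt dist_nonneg hz1)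
  refine ⟨?_, by linarith, by nlinarith⟩
  calc dist (0 : Pt d).2 u.2 ≤ dist (0:Pt d).2 z.2 + dist z.2 u.2 := dist_triangle _ _ _
  _ < 2 * ρ := by linarith

lemma rpow_le_fact_mul_exp' {γ : ℝ} (hγ : 0 ≤ γ) {t : ℝ} (ht : 0 < t) :
    t ^ γ ≤ Nat.factorial (Nat.ceil γ) * Real.exp t := by
  set n := Nat.ceil γ
  have hfact : (1 : ℝ) ≤ (Nat.factorial n : ℝ) := by
    exact_mod_cast Nat.factorial_pos n
  rcases le_total t 1 with h1 | h1
  · calc t ^ γ ≤ 1 := Real.rpow_le_one ht.le h1 hγ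
    _ ≤ (Nat.factorial n : ℝ) * Real.exp t := by
        have := Real.one_le_exp ht.le
        nlinarith
  · calc t ^ γ ≤ t ^ (n : ℝ) := Real.rpow_le_rpow_of_exponent_le h1 (Nat.le_ceil γ)
    _ = t ^ n := Real.rpow_natCast t n
    _ ≤ (Nat.factorial n : ℝ) * Real.exp t := by
        have h := Real.pow_div_factorial_le_exp t ht.le n
        have hf : (0:ℝ) < (Nat.factorial n : ℝ) := by exact_mod_cast Nat.factorial_pos n
        rw [div_le_iff₀ hf] at h
        linarith

lemma pKer_bound' (d : ℕ) (α : ℝ) (hα : 0 < α) (hαd : α < (d : ℝ) + 2) {R : ℝ} (hR : 0 < R)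
    {w : Pt d} (hw : w ∉ pCyl d R 0) :
    pKer d α w.1 ‖w.2‖ ≤
      ENNReal.ofReal (Nat.factorial (Nat.ceil (((d : ℝ) + 2 - α) / 2)) *
        R ^ (α - ((d : ℝ) + 2))) := by
  set γ := ((d : ℝ) + 2 - α) / 2 with hγdef
  have hγ : 0 < γ := by simp only [hγdef]; linarith
  set C := ((Nat.factorial (Nat.ceil γ)) : ℝ) with hC
  have hC1 : (1 : ℝ) ≤ C := by rw [hC]; exact_mod_cast Nat.factorial_pos _
  rw [pKer]
  split_ifs with hs
  · rw [ENNReal.ofReal_le_ofReal_iff (by positivity)]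
    have hRe : R ^ (α - ((d:ℝ) + 2)) = (R ^ 2) ^ (-γ) := by
      rw [← Real.rpow_natCast R 2, ← Real.rpow_mul hR.le]
      ring_nf
      rw [hγdef]; ring_nf
    rw [hRe]
    have hcase : R ≤ ‖w.2‖ ∨ R ^ 2 ≤ w.1 := by
      by_contra hcon
      push_neg at hcon
      exact hw ⟨by simpa [dist_eq_norm] using hcon.1, by simpa using hs.le, by simpa using hcon.2⟩
    have hR2 : (0:ℝ) < R ^ 2 := by positivity
    rcases hcase with hcase | hcase
    · set t := R ^ 2 / w.1 with htdef
      have ht : 0 < t := div_pos hR2 hs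
      have key : t ^ γ ≤ C * Real.exp t := rpow_le_fact_mul_exp' hγ.le ht
      have hexp : Real.exp (-(‖w.2‖ ^ 2) / w.1) ≤ Real.exp (-t) := by
        apply Real.exp_le_exp.mpr
        rw [htdef, neg_div, neg_le_neg_iff]
        gcongr <;> nlinarith [norm_nonneg w.2]
      have htγ : 0 < t ^ γ := Real.rpow_pos_of_pos ht γ
      have hexpt : Real.exp (-t) ≤ C * t ^ (-γ) := by
        have hdle : t ^ γ / C ≤ Real.exp t := by
          rw [div_le_iff₀ (by linarith)]
          nlinarith [Real.exp_pos t, key]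
        have h2 := inv_anti₀ (by positivity) hdle
        rw [Real.exp_neg, Real.rpow_neg ht.le]
        calc (Real.exp t)⁻¹ ≤ (t ^ γ / C)⁻¹ := h2
        _ = C * (t ^ γ)⁻¹ := by rw [inv_div, div_eq_mul_inv]
      have htneg : t ^ (-γ) = (R ^ 2) ^ (-γ) * w.1 ^ γ := by
        rw [htdef, Real.div_rpow hR2.le hs.le, Real.rpow_neg hs.le, div_eq_mul_inv, inv_inv]
      calc w.1 ^ (-γ) * Real.exp (-(‖w.2‖ ^ 2) / w.1)
          ≤ w.1 ^ (-γ) * (C * ((R ^ 2) ^ (-γ) * w.1 ^ γ)) := by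
            have h0 : (0:ℝ) ≤ w.1 ^ (-γ) := (Real.rpow_pos_of_pos hs _).le
            apply mul_le_mul_of_nonneg_left _ h0
            calc Real.exp (-(‖w.2‖ ^ 2) / w.1) ≤ Real.exp (-t) := hexp
            _ ≤ C * t ^ (-γ) := hexpt
            _ = C * ((R ^ 2) ^ (-γ) * w.1 ^ γ) := by rw [htneg]
      _ = C * (R ^ 2) ^ (-γ) * (w.1 ^ (-γ) * w.1 ^ γ) := by ring
      _ = C * (R ^ 2) ^ (-γ) := by
            rw [← Real.rpow_add hs, neg_add_cancel, Real.rpow_zero, mul_one]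
    · have h1 : w.1 ^ (-γ) ≤ (R ^ 2) ^ (-γ) :=
        Real.rpow_le_rpow_of_nonpos hR2 hcase (by linarith)
      have h2 : Real.exp (-(‖w.2‖ ^ 2) / w.1) ≤ 1 := by
        rw [Real.exp_le_one_iff]
        apply div_nonpos_of_nonpos_of_nonneg (neg_nonpos.mpr (by positivity)) hs.le
      have h3 : (0:ℝ) < (R ^ 2) ^ (-γ) := Real.rpow_pos_of_pos hR2 _
      have h4 : (0:ℝ) ≤ w.1 ^ (-γ) := (Real.rpow_pos_of_pos hs _).le
      nlinarith
  · exact zero_le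

lemma exists_annulus' (d : ℕ) {ρ : ℝ} (hρ : 0 < ρ) (w : Pt d) (hw1 : 0 < w.1)
    (hw2 : w ∉ pCyl d ρ 0) :
    ∃ n : ℕ, w ∈ pCyl d (2 ^ (n + 1) * ρ) 0 \ pCyl d (2 ^ n * ρ) 0 := by
  have hex : ∃ n : ℕ, w ∈ pCyl d (2 ^ (n + 1) * ρ) 0 := by
    set M : ℝ := max (max ‖w.2‖ w.1) 1 with hM
    have hM1 : 1 ≤ M := le_max_right _ _
    obtain ⟨n, hn⟩ := pow_unbounded_of_one_lt (M / ρ) (by norm_num : (1:ℝ) < 2)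
    refine ⟨n, ?_, by simpa using hw1.le, ?_⟩
    · have : M < 2 ^ n * ρ := by rwa [div_lt_iff₀ hρ] at hn
      have h2 : (2:ℝ) ^ n * ρ ≤ 2 ^ (n+1) * ρ := by
        have : (2:ℝ)^n ≤ 2^(n+1) := by norm_num [pow_succ]
        nlinarith
      have hnorm : ‖w.2‖ ≤ M := le_trans (le_max_left _ _) (le_max_left _ _)
      simp only [Prod.snd_zero, dist_zero_left]
      calc ‖w.2‖ ≤ M := hnorm
      _ < 2 ^ (n+1) * ρ := by linarith
    · have hMn : M < 2 ^ n * ρ := by rwa [div_lt_iff₀ hρ] at hn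
      have h1 : w.1 ≤ M := le_trans (le_max_right _ _) (le_max_left _ _)
      have : M ≤ M ^ 2 := by nlinarith
      have h2 : (2:ℝ)^n * ρ ≤ 2^(n+1)*ρ := by
        have : (2:ℝ)^n ≤ 2^(n+1) := by norm_num [pow_succ]
        nlinarith
      simp only [Prod.fst_zero, zero_add]
      calc w.1 ≤ M := h1
      _ ≤ M ^ 2 := by nlinarith
      _ < (2 ^ (n+1) * ρ) ^ 2 := by nlinarith
  classical
  let n₀ := Nat.find hex
  refine ⟨n₀, Nat.find_spec hex, ?_⟩
  rcases Nat.eq_zero_or_pos n₀ with h0 | h0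
  · rw [h0]; simpa using hw2
  · obtain ⟨m, hm⟩ := Nat.exists_eq_succ_of_ne_zero h0.ne'
    have := Nat.find_min hex (m := m) (by omega)
    rw [hm]
    simpa using this

lemma setLIntegral_le_Mbeta' (d : ℕ) (hd : 1 ≤ d) (β : ℝ) (g : Pt d → ℝ≥0∞) (z : Pt d)
    {r : ℝ} (hr : 0 < r) :
    ∫⁻ u in pCyl d r z, g u ≤
      ENNReal.ofReal (r ^ ((d : ℝ) + 2 - β)) * volume (Metric.ball (0 : Ed d) 1) *
        Mbeta d β g z := by
  haveI : Nonempty (Fin d) := Fin.pos_iff_nonempty.mp hd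
  set κ := volume (Metric.ball (0 : Ed d) 1) with hκ
  have hκ0 : κ ≠ 0 := (Metric.measure_ball_pos _ _ one_pos).ne'
  have hκt : κ ≠ ⊤ := measure_ball_lt_top.ne
  set V := volume (pCyl d r z) with hV
  have hVeq : V = ENNReal.ofReal (r ^ 2) * (ENNReal.ofReal (r ^ d) * κ) :=
    volume_pCyl' d hd r hr.le z
  have hV0 : V ≠ 0 := by
    rw [hVeq]
    exact mul_ne_zero (ENNReal.ofReal_pos.mpr (by positivity)).ne'
      (mul_ne_zero (ENNReal.ofReal_pos.mpr (by positivity)).ne' hκ0)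
  have hVt : V ≠ ⊤ := by
    rw [hVeq]
    exact ENNReal.mul_ne_top ENNReal.ofReal_ne_top
      (ENNReal.mul_ne_top ENNReal.ofReal_ne_top hκt)
  have hsplit : ∫⁻ u in pCyl d r z, g u = V * pAvg d r z g := by
    rw [pAvg, ← mul_assoc, ENNReal.mul_inv_cancel hV0 hVt, one_mul]
  rw [hsplit]
  have hMle : ENNReal.ofReal (r ^ β) * pAvg d r z g ≤ Mbeta d β g z :=
    le_iSup₂ (f := fun ρ (_ : 0 < ρ) => ENNReal.ofReal (ρ ^ β) * pAvg d ρ z g) r hr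
  have hcore : ENNReal.ofReal (r ^ 2) * ENNReal.ofReal (r ^ d)
      = ENNReal.ofReal (r ^ ((d : ℝ) + 2 - β)) * ENNReal.ofReal (r ^ β) := by
    rw [← ENNReal.ofReal_mul (by positivity), ← ENNReal.ofReal_mul (by positivity)]
    congr 1
    rw [← Real.rpow_natCast r 2, ← Real.rpow_natCast r d, ← Real.rpow_add hr,
      ← Real.rpow_add hr]
    congr 1
    push_cast
    ring
  have hVsplit : V = ENNReal.ofReal (r ^ ((d : ℝ) + 2 - β)) * κ * ENNReal.ofReal (r ^ β) := by
    rw [hVeq, ← mul_assoc, hcore]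
    ring
  calc V * pAvg d r z g
      = ENNReal.ofReal (r ^ ((d : ℝ) + 2 - β)) * κ * (ENNReal.ofReal (r ^ β) * pAvg d r z g) := by
        rw [hVsplit]; ring
  _ ≤ ENNReal.ofReal (r ^ ((d : ℝ) + 2 - β)) * κ * Mbeta d β g z :=
        mul_le_mul_right hMle _


/-- Corollary 2.6: for `α ∈ (0,β)`, `β ∈ (0, d+2]` there is `N = N(d,α,β)`
such that `P_α(1_{C_{2ρ}^c} g)(t,x) ≤ N ρ^{α-β} M_β g(t,x)` for all `(t,x) ∈ C_ρ`. -/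
theorem stmt5 (d : ℕ) (hd : 1 ≤ d) (α β : ℝ) (hα : 0 < α) (hαβ : α < β)
    (hβ : β ≤ (d : ℝ) + 2) :
    ∃ N : ℝ, 0 < N ∧ ∀ g : Pt d → ℝ≥0∞, Measurable g → ∀ ρ : ℝ, 0 < ρ →
      ∀ z ∈ pCyl d ρ 0,
        Palpha d α ((pCyl d (2 * ρ) 0)ᶜ.indicator g) z ≤
          ENNReal.ofReal (N * ρ ^ (α - β)) * Mbeta d β g z := by
  have hd2 : α < (d : ℝ) + 2 := lt_of_lt_of_le hαβ hβ
  haveI : Nonempty (Fin d) := Fin.pos_iff_nonempty.mp hd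
  haveI hinv : (volume : Measure (Pt d)).IsAddLeftInvariant :=
    (Measure.volume_eq_prod ℝ (Ed d)) ▸ inferInstance
  set γ := ((d : ℝ) + 2 - α) / 2 with hγ
  set C₀ : ℝ := (Nat.factorial (Nat.ceil γ) : ℝ) with hC₀
  have hC₀pos : 0 < C₀ := by rw [hC₀]; exact_mod_cast Nat.factorial_pos _
  set κ := volume (Metric.ball (0 : Ed d) 1) with hκ
  have hκ0 : κ ≠ 0 := (Metric.measure_ball_pos _ _ one_pos).ne'
  have hκt : κ ≠ ⊤ := measure_ball_lt_top.ne
  set Kr := κ.toReal with hKr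
  have hKrpos : 0 < Kr := ENNReal.toReal_pos hκ0 hκt
  set q : ℝ := (2:ℝ) ^ (α - β) with hq
  have hq0 : 0 < q := Real.rpow_pos_of_pos two_pos _
  have hq1 : q < 1 := Real.rpow_lt_one_of_one_lt_of_neg one_lt_two (by linarith)
  have h1q : 0 < 1 - q := by linarith
  refine ⟨(1 - q)⁻¹ * (C₀ * ((2:ℝ) ^ ((d:ℝ) + 2 - β) * Kr)), by positivity, ?_⟩
  intro g hg ρ hρ z hz
  set f := (pCyl d (2 * ρ) 0)ᶜ.indicator g with hf
  set M := Mbeta d β g z with hM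
  set h : Pt d → ℝ≥0∞ := fun w => pKer d α w.1 ‖w.2‖ * f (z + w) with hh
  have hPal : Palpha d α f z = ∫⁻ w, h w := rfl
  set T₀ : Set (Pt d) := {w | w.1 ≤ 0} ∪ pCyl d ρ 0 with hT₀
  have hT₀meas : MeasurableSet T₀ :=
    (measurable_fst measurableSet_Iic).union (measurableSet_pCyl' d ρ 0)
  have hzero : ∀ w ∈ T₀, h w = 0 := by
    rintro w (hw | hw)
    · have h0 : pKer d α w.1 ‖w.2‖ = 0 := if_neg (not_lt.mpr hw)
      simp only [hh, h0, zero_mul]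
    · have hzw : z + w ∈ pCyl d (2 * ρ) 0 := pCyl_sub' d ρ hz ((mem_pCyl_add' d ρ z w).mpr hw)
      have h0 : f (z + w) = 0 := Set.indicator_of_notMem (Set.notMem_compl_iff.mpr hzw) g
      simp only [hh, h0, mul_zero]
  set B : ℕ → Set (Pt d) := fun n => pCyl d (2 ^ (n + 1) * ρ) 0 \ pCyl d (2 ^ n * ρ) 0 with hB
  have hcover : (Set.univ : Set (Pt d)) ⊆ T₀ ∪ ⋃ n : ℕ, B n := by
    intro w _
    by_cases h1 : w.1 ≤ 0
    · exact Or.inl (Or.inl h1)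
    by_cases h2 : w ∈ pCyl d ρ 0
    · exact Or.inl (Or.inr h2)
    · obtain ⟨n, hn⟩ := exists_annulus' d hρ w (lt_of_not_ge h1) h2
      exact Or.inr (Set.mem_iUnion.mpr ⟨n, hn⟩)
  have hT0int : ∫⁻ w in T₀, h w = 0 := by
    apply le_antisymm _ (zero_le)
    calc ∫⁻ w in T₀, h w ≤ ∫⁻ _ in T₀, 0 :=
        setLIntegral_mono' hT₀meas (fun w hw => (hzero w hw).le)
    _ = 0 := by simp
  -- the per-annulus bound
  have hqn : ∀ n : ℕ, ((2:ℝ) ^ n) ^ (α - β) = q ^ n := by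
    intro n
    rw [hq, ← Real.rpow_natCast (2:ℝ) n, ← Real.rpow_mul (by norm_num),
      ← Real.rpow_natCast ((2:ℝ) ^ (α - β)) n, ← Real.rpow_mul (by norm_num)]
    congr 1
    ring
  have hann : ∀ n : ℕ, ∫⁻ w in B n, h w ≤
      (ENNReal.ofReal q) ^ n *
        (ENNReal.ofReal (C₀ * ((2:ℝ) ^ ((d:ℝ) + 2 - β) * ρ ^ (α - β))) * (κ * M)) := by
    intro n
    set R := (2:ℝ) ^ n * ρ with hR
    have hRpos : 0 < R := by positivity
    have hR2 : (2:ℝ) ^ (n + 1) * ρ = 2 * R := by rw [hR]; ring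
    have hBsub : B n ⊆ pCyl d (2 * R) 0 := by
      have hsub : B n ⊆ pCyl d (2 ^ (n + 1) * ρ) 0 := Set.diff_subset
      rwa [hR2] at hsub
    have hBmeas : MeasurableSet (B n) :=
      (measurableSet_pCyl' d _ 0).diff (measurableSet_pCyl' d _ 0)
    set c : ℝ≥0∞ := ENNReal.ofReal (C₀ * R ^ (α - ((d:ℝ) + 2))) with hc
    have hpre : pCyl d (2 * R) 0 = (fun w => z + w) ⁻¹' pCyl d (2 * R) z := by
      ext w
      simp only [Set.mem_preimage]
      exact (mem_pCyl_add' d (2 * R) z w).symm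
    have htrans : ∫⁻ w in pCyl d (2 * R) 0, f (z + w) = ∫⁻ u in pCyl d (2 * R) z, f u := by
      rw [hpre]
      exact (measurePreserving_add_left volume z).setLIntegral_comp_preimage_emb
        (MeasurableEquiv.addLeft z).measurableEmbedding f (pCyl d (2 * R) z)
    have hcoeff : C₀ * R ^ (α - ((d:ℝ) + 2)) * ((2 * R) ^ ((d:ℝ) + 2 - β))
        = q ^ n * (C₀ * ((2:ℝ) ^ ((d:ℝ) + 2 - β) * ρ ^ (α - β))) := by
      rw [Real.mul_rpow (by norm_num) hRpos.le]
      have h1 : R ^ (α - ((d:ℝ) + 2)) * R ^ ((d:ℝ) + 2 - β) = R ^ (α - β) := by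
        rw [← Real.rpow_add hRpos]; congr 1; ring
      have h2 : R ^ (α - β) = q ^ n * ρ ^ (α - β) := by
        rw [hR, Real.mul_rpow (by positivity) hρ.le, hqn n]
      calc C₀ * R ^ (α - ((d:ℝ) + 2)) * ((2:ℝ) ^ ((d:ℝ) + 2 - β) * R ^ ((d:ℝ) + 2 - β))
          = C₀ * (2:ℝ) ^ ((d:ℝ) + 2 - β) * (R ^ (α - ((d:ℝ) + 2)) * R ^ ((d:ℝ) + 2 - β)) := by
            ring
      _ = C₀ * (2:ℝ) ^ ((d:ℝ) + 2 - β) * R ^ (α - β) := by rw [h1]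
      _ = q ^ n * (C₀ * ((2:ℝ) ^ ((d:ℝ) + 2 - β) * ρ ^ (α - β))) := by rw [h2]; ring
    calc ∫⁻ w in B n, h w
        ≤ ∫⁻ w in B n, c * f (z + w) := by
          apply setLIntegral_mono' hBmeas
          intro w hw
          exact mul_le_mul_left (pKer_bound' d α hα hd2 hRpos hw.2) _
    _ = c * ∫⁻ w in B n, f (z + w) := lintegral_const_mul' _ _ ENNReal.ofReal_ne_top
    _ ≤ c * ∫⁻ w in pCyl d (2 * R) 0, f (z + w) :=
          mul_le_mul_right (lintegral_mono_set hBsub) _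
    _ = c * ∫⁻ u in pCyl d (2 * R) z, f u := by rw [htrans]
    _ ≤ c * ∫⁻ u in pCyl d (2 * R) z, g u :=
          mul_le_mul_right (lintegral_mono (fun u => Set.indicator_le_self _ _ u)) _
    _ ≤ c * (ENNReal.ofReal ((2 * R) ^ ((d:ℝ) + 2 - β)) * κ * M) :=
          mul_le_mul_right (setLIntegral_le_Mbeta' d hd β g z (by positivity)) _
    _ = (c * ENNReal.ofReal ((2 * R) ^ ((d:ℝ) + 2 - β))) * (κ * M) := by ring
    _ = ENNReal.ofReal (C₀ * R ^ (α - ((d:ℝ) + 2)) * ((2 * R) ^ ((d:ℝ) + 2 - β))) * (κ * M) := by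
          rw [hc, ← ENNReal.ofReal_mul (by positivity)]
    _ = ENNReal.ofReal (q ^ n * (C₀ * ((2:ℝ) ^ ((d:ℝ) + 2 - β) * ρ ^ (α - β)))) * (κ * M) := by
          rw [hcoeff]
    _ = (ENNReal.ofReal q) ^ n *
          (ENNReal.ofReal (C₀ * ((2:ℝ) ^ ((d:ℝ) + 2 - β) * ρ ^ (α - β))) * (κ * M)) := by
          rw [ENNReal.ofReal_mul (by positivity), ENNReal.ofReal_pow hq0.le]
          ring
  -- assemble
  set A : ℝ≥0∞ := ENNReal.ofReal (C₀ * ((2:ℝ) ^ ((d:ℝ) + 2 - β) * ρ ^ (α - β))) * (κ * M) with hA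
  have hmain : Palpha d α f z ≤ (1 - ENNReal.ofReal q)⁻¹ * A := by
    calc Palpha d α f z = ∫⁻ w, h w := hPal
    _ = ∫⁻ w in Set.univ, h w := (setLIntegral_univ _).symm
    _ ≤ ∫⁻ w in T₀ ∪ ⋃ n : ℕ, B n, h w := lintegral_mono_set hcover
    _ ≤ (∫⁻ w in T₀, h w) + ∫⁻ w in ⋃ n : ℕ, B n, h w := lintegral_union_le _ _ _
    _ ≤ 0 + ∑' n : ℕ, ∫⁻ w in B n, h w := by
          rw [hT0int]
          exact add_le_add_right (lintegral_iUnion_le _ _) _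
    _ = ∑' n : ℕ, ∫⁻ w in B n, h w := by rw [zero_add]
    _ ≤ ∑' n : ℕ, (ENNReal.ofReal q) ^ n * A := ENNReal.tsum_le_tsum hann
    _ = (∑' n : ℕ, (ENNReal.ofReal q) ^ n) * A := ENNReal.tsum_mul_right
    _ = (1 - ENNReal.ofReal q)⁻¹ * A := by rw [ENNReal.tsum_geometric]
  have hgeo : (1 - ENNReal.ofReal q)⁻¹ = ENNReal.ofReal ((1 - q)⁻¹) := by
    rw [← ENNReal.ofReal_one, ← ENNReal.ofReal_sub _ hq0.le,
      ENNReal.ofReal_inv_of_pos (by linarith)]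
  have hκeq : κ = ENNReal.ofReal Kr := (ENNReal.ofReal_toReal hκt).symm
  refine hmain.trans (le_of_eq ?_)
  rw [hgeo, hA, hκeq]
  rw [show ENNReal.ofReal (1 - q)⁻¹ *
      (ENNReal.ofReal (C₀ * ((2:ℝ) ^ ((d:ℝ) + 2 - β) * ρ ^ (α - β))) * (ENNReal.ofReal Kr * M))
      = (ENNReal.ofReal (1 - q)⁻¹ *
          ENNReal.ofReal (C₀ * ((2:ℝ) ^ ((d:ℝ) + 2 - β) * ρ ^ (α - β))) *
          ENNReal.ofReal Kr) * M from by ring]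
  rw [← ENNReal.ofReal_mul (by positivity), ← ENNReal.ofReal_mul (by positivity)]
  congr 1
  ring
end
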